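/- Population-level double robustness: define ψ := Σ_x ℙ(X = x | R = false) · E[Y | X = x, A = a, R = true] and, for functions g : 𝒳 → ℝ, e : 𝒳 → (0, 1], p : 𝒳 → (0, 1), define Φ(g, e, p) := (1/ℙ(R = false)) · E[ ((1 − p(X(ω))) · 1{R = true, A = a}(ω) / (e(X(ω)) · p(X(ω)))) · (Y(ω) − g(X(ω))) + 1{R = false}(ω) · g(X(ω)) ]. If either (i) g(x) = E[Y | X = x, A = a, R = true] for all x in the support of X, or (ii) p(x) = ℙ(R = true | X = x) and e(x) = ℙ(A = a | X = x, R = true) for all x in the support of X, then Φ(g, e, p) = ψ. -/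
import Mathlib


open Finset

attribute [local instance] Classical.propDecidable

variable {Ω : Type*}

/-- Probability of an event. -/
noncomputable def pr [Fintype Ω] (P : Ω → ℝ) (E : Ω → Prop) : ℝ :=
  ∑ ω, if E ω then P ω else 0

/-- Expectation of a real random variable. -/
noncomputable def ex [Fintype Ω] (P : Ω → ℝ) (Z : Ω → ℝ) : ℝ :=
  ∑ ω, P ω * Z ω

/-- Conditional probability ℙ(F | E) = ℙ(F ∩ E)/ℙ(E). -/
noncomputable def cpr [Fintype Ω] (P : Ω → ℝ) (F E : Ω → Prop) : ℝ :=
  pr P (fun ω => F ω ∧ E ω) / pr P E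

/-- Conditional expectation E[Z | E] = E[Z·1_E]/ℙ(E). -/
noncomputable def cex [Fintype Ω] (P : Ω → ℝ) (Z : Ω → ℝ) (E : Ω → Prop) : ℝ :=
  (∑ ω, if E ω then P ω * Z ω else 0) / pr P E

lemma pr_congr [Fintype Ω] (P : Ω → ℝ) {E F : Ω → Prop} (h : ∀ ω, E ω ↔ F ω) :
    pr P E = pr P F := by
  unfold pr
  exact Finset.sum_congr rfl fun ω _ => by simp [h ω]

lemma pr_nonneg [Fintype Ω] (P : Ω → ℝ) (hP0 : ∀ ω, 0 ≤ P ω) (E : Ω → Prop) :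
    0 ≤ pr P E :=
  Finset.sum_nonneg fun ω _ => by by_cases hE : E ω <;> simp [hE, hP0 ω]

lemma pr_mono [Fintype Ω] (P : Ω → ℝ) (hP0 : ∀ ω, 0 ≤ P ω) {E F : Ω → Prop}
    (h : ∀ ω, E ω → F ω) : pr P E ≤ pr P F := by
  refine Finset.sum_le_sum fun ω _ => ?_
  by_cases hE : E ω
  · simp [hE, h ω hE]
  · by_cases hF : F ω <;> simp [hE, hF, hP0 ω]

lemma pr_zero_fiber [Fintype Ω] (P : Ω → ℝ) (hP0 : ∀ ω, 0 ≤ P ω) {E : Ω → Prop}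
    (h : pr P E = 0) : ∀ ω, E ω → P ω = 0 := by
  intro ω hE
  have := (Finset.sum_eq_zero_iff_of_nonneg
    (fun ω _ => by by_cases hE : E ω <;> simp [hE, hP0 ω])).mp h ω (Finset.mem_univ ω)
  simpa [hE] using this

/-- Population-level double robustness: the doubly robust functional
Φ(g, e, p) equals ψ if either the outcome model or both the participation and
treatment models are correctly specified. -/
theorem double_robustness
    {𝒳 𝒯 : Type*} [Fintype Ω] [Fintype 𝒳] [Fintype 𝒯]
    (P : Ω → ℝ) (hP0 : ∀ ω, 0 ≤ P ω) (hP1 : ∑ ω, P ω = 1)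
    (X : Ω → 𝒳) (A : Ω → 𝒯) (Y : Ω → ℝ) (R : Ω → Bool) (a : 𝒯)
    -- positivity
    (hposT : 0 < pr P (fun ω => R ω = false))
    (hpos : ∀ x, 0 < pr P (fun ω => X ω = x) →
      0 < pr P (fun ω => A ω = a ∧ X ω = x ∧ R ω = true))
    -- nuisance functions with the stated ranges
    (g p e : 𝒳 → ℝ) (hp : ∀ x, 0 < p x ∧ p x < 1) (he : ∀ x, 0 < e x ∧ e x ≤ 1)
    -- double robustness hypothesis: (i) or (ii)
    (hdr :
      (∀ x, 0 < pr P (fun ω => X ω = x) →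
        g x = cex P Y (fun ω => X ω = x ∧ A ω = a ∧ R ω = true))
      ∨ ((∀ x, 0 < pr P (fun ω => X ω = x) →
            p x = cpr P (fun ω => R ω = true) (fun ω => X ω = x))
          ∧ (∀ x, 0 < pr P (fun ω => X ω = x) →
            e x = cpr P (fun ω => A ω = a) (fun ω => X ω = x ∧ R ω = true)))) :
    (pr P (fun ω => R ω = false))⁻¹
        * ex P (fun ω =>
            ((1 - p (X ω)) * (if R ω = true ∧ A ω = a then (1 : ℝ) else 0)
                / (e (X ω) * p (X ω)))
              * (Y ω - g (X ω))
            + (if R ω = false then (1 : ℝ) else 0) * g (X ω))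
      = ∑ x, cpr P (fun ω => X ω = x) (fun ω => R ω = false)
          * cex P Y (fun ω => X ω = x ∧ A ω = a ∧ R ω = true) := by
  set T : ℝ := pr P (fun ω => R ω = false) with hT
  have hT0 : T ≠ 0 := ne_of_gt hposT
  -- per-x quantities
  set S : 𝒳 → ℝ := fun x => ∑ ω,
      @ite ℝ (X ω = x ∧ A ω = a ∧ R ω = true) (Classical.propDecidable _) (P ω * Y ω) 0
    with hS
  set m : 𝒳 → ℝ := fun x => pr P (fun ω => X ω = x ∧ A ω = a ∧ R ω = true) with hm
  set n : 𝒳 → ℝ := fun x => pr P (fun ω => X ω = x ∧ R ω = false) with hn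
  set F : Ω → ℝ := fun ω =>
      ((1 - p (X ω)) * (if R ω = true ∧ A ω = a then (1 : ℝ) else 0)
          / (e (X ω) * p (X ω)))
        * (Y ω - g (X ω))
      + (if R ω = false then (1 : ℝ) else 0) * g (X ω) with hF
  -- Step 1: fiberwise decomposition of the expectation
  have step1 : ex P F = ∑ x, ((1 - p x) / (e x * p x) * (S x - g x * m x) + g x * n x) := by
    have h1 : ex P F = ∑ x, ∑ ω, if X ω = x then P ω * F ω else 0 := by
      rw [ex, Finset.sum_comm]
      refine Finset.sum_congr rfl fun ω _ => ?_
      simp [Finset.sum_ite_eq]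
    rw [h1]
    refine Finset.sum_congr rfl fun x _ => ?_
    have hpt : ∀ ω, (if X ω = x then P ω * F ω else 0)
        = (1 - p x) / (e x * p x) *
            ((@ite ℝ (X ω = x ∧ A ω = a ∧ R ω = true) (Classical.propDecidable _) (P ω * Y ω) 0)
              - g x * (@ite ℝ (X ω = x ∧ A ω = a ∧ R ω = true) (Classical.propDecidable _) (P ω) 0))
          + g x * (@ite ℝ (X ω = x ∧ R ω = false) (Classical.propDecidable _) (P ω) 0) := by
      intro ω
      by_cases hX : X ω = x
      · by_cases hR : R ω <;> by_cases hA : A ω = a <;>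
          simp [hF, hX, hR, hA] <;> ring
      · simp [hX]
    rw [Finset.sum_congr rfl (fun ω _ => hpt ω), Finset.sum_add_distrib,
      ← Finset.mul_sum, ← Finset.mul_sum, Finset.sum_sub_distrib, ← Finset.mul_sum]
    simp only [hS, hm, hn, pr]
  -- rewrite the RHS
  have hRHS : ∀ x, cpr P (fun ω => X ω = x) (fun ω => R ω = false)
      * cex P Y (fun ω => X ω = x ∧ A ω = a ∧ R ω = true)
      = (n x / T) * (S x / m x) := by
    intro x
    simp only [cpr, cex, hS, hm, hn, hT]
  rw [step1, Finset.mul_sum, Finset.sum_congr rfl (fun x _ => hRHS x)]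
  -- Step 2: per-x identity
  refine Finset.sum_congr rfl fun x _ => ?_
  by_cases hq : 0 < pr P (fun ω => X ω = x)
  · -- positive fiber
    have hm0 : 0 < m x := by
      have h := hpos x hq
      have heq : pr P (fun ω => A ω = a ∧ X ω = x ∧ R ω = true)
          = pr P (fun ω => X ω = x ∧ A ω = a ∧ R ω = true) :=
        pr_congr P (fun ω => by tauto)
      rw [heq] at h
      exact h
    have hmne : m x ≠ 0 := ne_of_gt hm0
    rcases hdr with hi | ⟨hpi, hei⟩
    · have hg : g x = S x / m x := by
        rw [hi x hq]
        simp only [cex, hS, hm]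
      rw [hg]
      field_simp
      try ring
    · -- case (ii)
      set r : ℝ := pr P (fun ω => X ω = x ∧ R ω = true) with hr
      have hpr : p x = r / pr P (fun ω => X ω = x) := by
        rw [hpi x hq, cpr, hr]
        rw [pr_congr P (E := fun ω => R ω = true ∧ X ω = x)
            (F := fun ω => X ω = x ∧ R ω = true) (fun ω => by tauto)]
      have her : e x = m x / r := by
        rw [hei x hq, cpr, hr, hm]
        rw [pr_congr P (E := fun ω => A ω = a ∧ X ω = x ∧ R ω = true)
            (F := fun ω => X ω = x ∧ A ω = a ∧ R ω = true) (fun ω => by tauto)]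
      have hr0 : 0 < r := lt_of_lt_of_le hm0
        (pr_mono P hP0 (fun ω h => ⟨h.1, h.2.2⟩))
      have hrne : r ≠ 0 := ne_of_gt hr0
      have hq0 : pr P (fun ω => X ω = x) ≠ 0 := ne_of_gt hq
      have hqrn : pr P (fun ω => X ω = x) = r + n x := by
        simp only [hr, hn, pr]
        rw [← Finset.sum_add_distrib]
        refine Finset.sum_congr rfl fun ω _ => ?_
        by_cases hX : X ω = x <;> by_cases hR : R ω <;> simp [hX, hR]
      have hep : e x * p x = m x / pr P (fun ω => X ω = x) := by
        rw [her, hpr]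
        field_simp
        try ring
      have h1p : 1 - p x = n x / pr P (fun ω => X ω = x) := by
        rw [hpr, eq_div_iff hq0, sub_mul, one_mul, div_mul_cancel₀ _ hq0]
        linarith [hqrn]
      rw [h1p, hep]
      field_simp
      try ring
  · -- null fiber: everything vanishes
    have hq0 : pr P (fun ω => X ω = x) = 0 :=
      le_antisymm (not_lt.mp hq) (pr_nonneg P hP0 _)
    have hz : ∀ ω, X ω = x → P ω = 0 := by
      intro ω hX
      exact pr_zero_fiber P hP0 hq0 ω hX
    have hS0 : S x = 0 := by
      simp only [hS]
      refine Finset.sum_eq_zero fun ω _ => ?_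
      by_cases hc : X ω = x ∧ A ω = a ∧ R ω = true
      · simp [hc, hz ω hc.1]
      · simp [hc]
    have hm0 : m x = 0 := by
      simp only [hm, pr]
      refine Finset.sum_eq_zero fun ω _ => ?_
      by_cases hc : X ω = x ∧ A ω = a ∧ R ω = true
      · simp [hc, hz ω hc.1]
      · simp [hc]
    have hn0 : n x = 0 := by
      simp only [hn, pr]
      refine Finset.sum_eq_zero fun ω _ => ?_
      by_cases hc : X ω = x ∧ R ω = false
      · simp [hc, hz ω hc.1]
      · simp [hc]
    simp [hS0, hm0, hn0]
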